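/- Let H be a real Hilbert space, let L > 0, and let {(y_i, u_i)}_{i ∈ J} be a family of pairs in H × H. Then the following are equivalent: (i) there exists an L-Lipschitz continuous map G : H → H with G(y_i) = u_i for every i ∈ J; (ii) for all i, j ∈ J, ‖u_i − u_j‖ ≤ L‖y_i − y_j‖. -/

import Mathlib

open Finset Metric

section KV

variable {H : Type*} [NormedAddCommGroup H] [InnerProductSpace ℝ H]

/-- quadratic expansion of a symmetric weighted double sum -/
lemma kv_sum_pair {α : Type*} (T : Finset α) (w : α → ℝ) (P : α → H)
    (hw1 : ∑ x ∈ T, w x = 1) :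
    ∑ x ∈ T, ∑ x' ∈ T, w x * w x' * ‖P x - P x'‖ ^ 2
      = 2 * (∑ x ∈ T, w x * ‖P x‖ ^ 2) - 2 * ‖∑ x ∈ T, w x • P x‖ ^ 2 := by
  have expand : ∀ x x', ‖P x - P x'‖ ^ 2
      = ‖P x‖ ^ 2 + ‖P x'‖ ^ 2 - 2 * inner ℝ (P x) (P x') := fun x x' => by
    rw [@norm_sub_sq_real]; ring
  have hinner : ‖∑ x ∈ T, w x • P x‖ ^ 2
      = ∑ x ∈ T, ∑ x' ∈ T, w x * w x' * inner ℝ (P x) (P x') := by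
    rw [← real_inner_self_eq_norm_sq, sum_inner]
    refine Finset.sum_congr rfl fun x hx => ?_
    rw [real_inner_smul_left, inner_sum, mul_sum]
    refine Finset.sum_congr rfl fun x' hx' => ?_
    rw [real_inner_smul_right]; ring
  calc ∑ x ∈ T, ∑ x' ∈ T, w x * w x' * ‖P x - P x'‖ ^ 2
      = ∑ x ∈ T, ∑ x' ∈ T, (w x * w x' * ‖P x‖ ^ 2 + w x * w x' * ‖P x'‖ ^ 2
          - 2 * (w x * w x' * inner ℝ (P x) (P x'))) := by
        refine Finset.sum_congr rfl fun x hx => Finset.sum_congr rfl fun x' hx' => ?_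
        rw [expand]; ring
    _ = 2 * (∑ x ∈ T, w x * ‖P x‖ ^ 2) - 2 * ‖∑ x ∈ T, w x • P x‖ ^ 2 := by
        rw [hinner]
        simp only [Finset.sum_sub_distrib, Finset.sum_add_distrib, ← Finset.mul_sum,
          ← Finset.sum_mul]
        have h1 : ∑ x ∈ T, (w x * ∑ x' ∈ T, w x') * ‖P x‖ ^ 2
            = ∑ x ∈ T, w x * ‖P x‖ ^ 2 := by
          refine Finset.sum_congr rfl fun x hx => by rw [hw1]; ring
        have h2 : ∑ x ∈ T, ∑ x' ∈ T, w x * w x' * ‖P x'‖ ^ 2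
            = ∑ x ∈ T, w x * ‖P x‖ ^ 2 := by
          rw [Finset.sum_comm]
          refine Finset.sum_congr rfl fun x hx => ?_
          rw [← Finset.sum_mul, ← Finset.sum_mul, hw1]; ring
        rw [h1, h2]; ring

lemma kv_continuous_sup' {X ι : Type*} [TopologicalSpace X] (A : Finset ι) (hA : A.Nonempty)
    (g : ι → X → ℝ) (hg : ∀ p, Continuous (g p)) :
    Continuous (fun z => A.sup' hA (fun p => g p z)) := by
  induction hA using Finset.Nonempty.cons_induction with
  | singleton p => simpa using hg p
  | cons p B hpB hB ih =>
      have : (fun z => (Finset.cons p B hpB).sup' (Finset.cons_nonempty hpB) (fun q => g q z))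
          = fun z => max (g p z) (B.sup' hB (fun q => g q z)) := by
        funext z; rw [Finset.sup'_cons hB]
      rw [this]
      exact (hg p).max ih

set_option maxHeartbeats 1000000 in
lemma kv_finite {ι : Type*} (A : Finset ι) (hA : A.Nonempty) (u b : ι → H)
    (h : ∀ p ∈ A, ∀ q ∈ A, ‖u p - u q‖ ≤ ‖b p - b q‖) :
    ∃ z : H, ∀ p ∈ A, ‖z - u p‖ ≤ ‖b p‖ := by
  classical
  set C : Set H := convexHull ℝ (u '' ↑A) with hC
  have hCcpt : IsCompact C := (A.finite_toSet.image u).isCompact_convexHull ℝ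
  have hCne : C.Nonempty := by
    obtain ⟨p, hp⟩ := hA
    exact ⟨u p, subset_convexHull ℝ _ ⟨p, by simpa using hp, rfl⟩⟩
  set f : H → ℝ := fun z => A.sup' hA (fun p => ‖z - u p‖ - ‖b p‖) with hf
  have hfc : Continuous f :=
    kv_continuous_sup' A hA _ (fun p => ((continuous_id.sub continuous_const).norm).sub
      continuous_const)
  obtain ⟨z, hzC, hmin⟩ := hCcpt.exists_isMinOn hCne hfc.continuousOn
  -- it suffices to show f z ≤ 0
  suffices hfz : f z ≤ 0 by
    refine ⟨z, fun p hp => ?_⟩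
    have := Finset.le_sup' (fun p => ‖z - u p‖ - ‖b p‖) hp
    linarith [this.trans hfz]
  by_contra hm0
  push_neg at hm0
  set m : ℝ := f z with hmdef
  -- active set
  set A' : Finset ι := A.filter (fun p => ‖z - u p‖ - ‖b p‖ = m) with hA'
  have hA'sub : A' ⊆ A := Finset.filter_subset _ _
  have hA'ne : A'.Nonempty := by
    obtain ⟨p, hp, hpe⟩ := Finset.exists_mem_eq_sup' hA (fun p => ‖z - u p‖ - ‖b p‖)
    exact ⟨p, Finset.mem_filter.2 ⟨hp, hpe.symm⟩⟩
  set D : Set H := convexHull ℝ (u '' ↑A') with hD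
  have hDC : D ⊆ C := convexHull_mono (Set.image_mono (by exact_mod_cast hA'sub))
  have hDcpt : IsCompact D := (A'.finite_toSet.image u).isCompact_convexHull ℝ
  have hDconv : Convex ℝ D := convex_convexHull ℝ _
  have hDne : D.Nonempty := by
    obtain ⟨p, hp⟩ := hA'ne
    exact ⟨u p, subset_convexHull ℝ _ ⟨p, by simpa using hp, rfl⟩⟩
  -- z belongs to D
  have hzD : z ∈ D := by
    by_contra hzD
    obtain ⟨c, hcD, hcmin⟩ := exists_norm_eq_iInf_of_complete_convex hDne
      (hDcpt.isComplete) hDconv z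
    have hchar := (norm_eq_iInf_iff_real_inner_le_zero hDconv hcD).1 hcmin
    set v : H := c - z with hv
    have hvne : v ≠ 0 := sub_ne_zero.2 (fun hzc => hzD (hzc ▸ hcD))
    have hvn : (0:ℝ) < ‖v‖ := norm_pos_iff.2 hvne
    have hvpos : (0:ℝ) < ‖v‖ ^ 2 := by positivity
    have hkey : ∀ p ∈ A', ‖v‖ ^ 2 ≤ inner ℝ (u p - z) v := by
      intro p hp
      have hup : u p ∈ D := subset_convexHull ℝ _ ⟨p, by simpa using hp, rfl⟩
      have h1 : inner ℝ (z - c) (u p - c) ≤ (0:ℝ) := hchar _ hup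
      have : (inner ℝ (u p - z) v : ℝ) = inner ℝ (c - z) (u p - c) + ‖v‖ ^ 2 := by
        rw [hv, ← real_inner_self_eq_norm_sq]
        have : u p - z = (u p - c) + (c - z) := by abel
        rw [this, inner_add_left, real_inner_comm (u p - c) (c - z)]
      rw [this]
      have h2 : (0:ℝ) ≤ inner ℝ (c - z) (u p - c) := by
        have : (inner ℝ (c - z) (u p - c) : ℝ) = - inner ℝ (z - c) (u p - c) := by
          rw [← inner_neg_left]; norm_num
        linarith [this ▸ neg_nonneg.2 h1]
      linarith
    -- choose step size
    set B : Finset ι := A \ A' with hB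
    have hgap : ∃ δ : ℝ, 0 < δ ∧ ∀ p ∈ B, ‖z - u p‖ - ‖b p‖ ≤ m - δ := by
      rcases B.eq_empty_or_nonempty with hBe | hBne
      · exact ⟨1, one_pos, fun p hp => by simp [hBe] at hp⟩
      · refine ⟨m - B.sup' hBne (fun p => ‖z - u p‖ - ‖b p‖), ?_, fun p hp => ?_⟩
        · have hlt : B.sup' hBne (fun p => ‖z - u p‖ - ‖b p‖) < m := by
            rw [Finset.sup'_lt_iff]
            intro p hp
            have hpA : p ∈ A := (Finset.mem_sdiff.1 hp).1
            have hpn : ¬ (‖z - u p‖ - ‖b p‖ = m) := by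
              intro he
              exact (Finset.mem_sdiff.1 hp).2 (Finset.mem_filter.2 ⟨hpA, he⟩)
            have hle : ‖z - u p‖ - ‖b p‖ ≤ m :=
              Finset.le_sup' (fun p => ‖z - u p‖ - ‖b p‖) hpA
            exact lt_of_le_of_ne hle hpn
          linarith
        · have := Finset.le_sup' (fun p => ‖z - u p‖ - ‖b p‖) hp
          linarith
    obtain ⟨δ, hδ, hδB⟩ := hgap
    set t : ℝ := min 1 (δ / (2 * ‖v‖)) with ht
    have ht0 : 0 < t := lt_min one_pos (by positivity)
    have ht1 : t ≤ 1 := min_le_left _ _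
    have htv : t * ‖v‖ ≤ δ / 2 := by
      have : t ≤ δ / (2 * ‖v‖) := min_le_right _ _
      calc t * ‖v‖ ≤ (δ / (2 * ‖v‖)) * ‖v‖ := by nlinarith
        _ = δ / 2 := by field_simp
    set znew : H := z + t • v with hznew
    have hznewC : znew ∈ C := by
      have : znew = (1 - t) • z + t • c := by
        rw [hznew, hv]; module
      rw [this]
      exact (convex_convexHull ℝ _) hzC (hDC hcD) (by linarith) (le_of_lt ht0) (by ring)
    -- value at znew is < m
    have hlt : f znew < m := by
      show (A.sup' hA fun p => ‖znew - u p‖ - ‖b p‖) < m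
      rw [Finset.sup'_lt_iff]
      intro p hp
      by_cases hpa : p ∈ A'
      · -- active : strict decrease
        have hk := hkey p hpa
        have hsq : ‖znew - u p‖ ^ 2 < ‖z - u p‖ ^ 2 := by
          have hexp : ‖znew - u p‖ ^ 2
              = ‖z - u p‖ ^ 2 + 2 * t * inner ℝ (z - u p) v + t ^ 2 * ‖v‖ ^ 2 := by
            rw [hznew]
            have : z + t • v - u p = (z - u p) + t • v := by abel
            rw [this, @norm_add_sq_real, real_inner_smul_right, norm_smul]
            simp [abs_of_pos ht0]
            ring
          have hiz : (inner ℝ (z - u p) v : ℝ) = - inner ℝ (u p - z) v := by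
            rw [← inner_neg_left]; norm_num
          have h4 : t * ‖v‖ ^ 2 ≤ t * inner ℝ (u p - z) v :=
            mul_le_mul_of_nonneg_left hk ht0.le
          have h5 : t ^ 2 * ‖v‖ ^ 2 ≤ t * ‖v‖ ^ 2 :=
            mul_le_mul_of_nonneg_right (by nlinarith) hvpos.le
          have h6 : 0 < t * ‖v‖ ^ 2 := mul_pos ht0 hvpos
          nlinarith
        have hn : ‖znew - u p‖ < ‖z - u p‖ := by
          have h1 := norm_nonneg (znew - u p)
          have h2 := norm_nonneg (z - u p)
          nlinarith
        have heq : ‖z - u p‖ - ‖b p‖ = m := (Finset.mem_filter.1 hpa).2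
        linarith
      · -- inactive
        have hpB : p ∈ B := Finset.mem_sdiff.2 ⟨hp, hpa⟩
        have h1 := hδB p hpB
        have h2 : ‖znew - u p‖ ≤ ‖z - u p‖ + t * ‖v‖ := by
          have : znew - u p = (z - u p) + t • v := by rw [hznew]; abel
          rw [this]
          refine (norm_add_le _ _).trans ?_
          rw [norm_smul, Real.norm_eq_abs, abs_of_pos ht0]
        linarith
    rw [hmdef] at hlt
    exact absurd (hmin hznewC) (not_le.2 hlt)
  -- z in hull of active points : derive contradiction
  rw [hD, _root_.convexHull_eq] at hzD
  obtain ⟨κ, T, w, zf, hw0, hw1, hzf, hcm⟩ := hzD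
  rw [Finset.centerMass_eq_of_sum_1 _ _ hw1] at hcm
  -- choose representatives
  have hrep : ∀ i : κ, ∃ p : ι, i ∈ T → (p ∈ A' ∧ u p = zf i) := by
    intro i
    by_cases hi : i ∈ T
    · obtain ⟨p, hp, hpe⟩ := hzf i hi
      exact ⟨p, fun _ => ⟨by simpa using hp, hpe⟩⟩
    · exact ⟨hA.choose, fun h => absurd h hi⟩
  choose q hq using hrep
  set P : κ → H := fun i => b (q i) with hP
  set Q : κ → H := fun i => zf i - z with hQ
  have hQ0 : ∑ i ∈ T, w i • Q i = 0 := by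
    rw [hQ]
    simp only [smul_sub, Finset.sum_sub_distrib, hcm, ← Finset.sum_smul, hw1, one_smul, sub_self]
  have hSnn : (0:ℝ) ≤ ∑ i ∈ T, ∑ i' ∈ T, w i * w i' * (‖P i - P i'‖ ^ 2 - ‖Q i - Q i'‖ ^ 2) := by
    refine Finset.sum_nonneg fun i hi => Finset.sum_nonneg fun i' hi' => ?_
    have hQe : ‖Q i - Q i'‖ = ‖u (q i) - u (q i')‖ := by
      rw [hQ]
      simp only
      rw [(hq i hi).2, (hq i' hi').2]
      congr 1; abel
    have hle : ‖Q i - Q i'‖ ≤ ‖P i - P i'‖ := by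
      rw [hQe, hP]
      exact h _ (hA'sub (hq i hi).1) _ (hA'sub (hq i' hi').1)
    have h1 := norm_nonneg (Q i - Q i')
    have h2 := norm_nonneg (P i - P i')
    have : ‖Q i - Q i'‖ ^ 2 ≤ ‖P i - P i'‖ ^ 2 := by nlinarith
    have := mul_nonneg (hw0 i hi) (hw0 i' hi')
    nlinarith
  have hsplit : ∑ i ∈ T, ∑ i' ∈ T, w i * w i' * (‖P i - P i'‖ ^ 2 - ‖Q i - Q i'‖ ^ 2)
      = (2 * (∑ i ∈ T, w i * ‖P i‖ ^ 2) - 2 * ‖∑ i ∈ T, w i • P i‖ ^ 2)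
        - (2 * (∑ i ∈ T, w i * ‖Q i‖ ^ 2) - 2 * ‖∑ i ∈ T, w i • Q i‖ ^ 2) := by
    rw [← kv_sum_pair T w P hw1, ← kv_sum_pair T w Q hw1]
    rw [← Finset.sum_sub_distrib]
    refine Finset.sum_congr rfl fun i hi => ?_
    rw [← Finset.sum_sub_distrib]
    refine Finset.sum_congr rfl fun i' hi' => ?_
    ring
  have hQnorm : ∀ i ∈ T, ‖Q i‖ = m + ‖P i‖ := by
    intro i hi
    have hact : ‖z - u (q i)‖ - ‖b (q i)‖ = m := (Finset.mem_filter.1 (hq i hi).1).2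
    have : ‖Q i‖ = ‖z - u (q i)‖ := by
      rw [hQ]
      simp only
      rw [(hq i hi).2.symm, norm_sub_rev]
    rw [this, hP]
    linarith
  have hbound : ∑ i ∈ T, w i * (‖P i‖ ^ 2 - ‖Q i‖ ^ 2) ≤ -(m ^ 2) := by
    calc ∑ i ∈ T, w i * (‖P i‖ ^ 2 - ‖Q i‖ ^ 2)
        ≤ ∑ i ∈ T, w i * (-(m ^ 2)) := by
          refine Finset.sum_le_sum fun i hi => ?_
          have hqn := hQnorm i hi
          have h1 : ‖P i‖ ^ 2 - ‖Q i‖ ^ 2 = -(2 * m * ‖P i‖) - m ^ 2 := by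
            rw [hqn]; ring
          have h2 : (0:ℝ) ≤ ‖P i‖ := norm_nonneg _
          have h3 := hw0 i hi
          have h4 : ‖P i‖ ^ 2 - ‖Q i‖ ^ 2 ≤ -(m ^ 2) := by nlinarith [hm0]
          exact mul_le_mul_of_nonneg_left h4 h3
      _ = -(m ^ 2) := by rw [← Finset.sum_mul, hw1]; ring
  rw [hsplit, hQ0] at hSnn
  simp only [norm_zero] at hSnn
  have hPn := sq_nonneg ‖∑ i ∈ T, w i • P i‖
  have hsum : ∑ i ∈ T, w i * ‖P i‖ ^ 2 - ∑ i ∈ T, w i * ‖Q i‖ ^ 2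
      = ∑ i ∈ T, w i * (‖P i‖ ^ 2 - ‖Q i‖ ^ 2) := by
    rw [← Finset.sum_sub_distrib]
    exact Finset.sum_congr rfl fun i hi => by ring
  nlinarith [hm0]

set_option maxHeartbeats 1000000 in
lemma kv_inter [CompleteSpace H] {ι : Type*} (u b : ι → H)
    (h : ∀ p q, ‖u p - u q‖ ≤ ‖b p - b q‖) :
    ∃ z : H, ∀ p, ‖z - u p‖ ≤ ‖b p‖ := by
  classical
  rcases isEmpty_or_nonempty ι with hemp | hne
  · exact ⟨0, fun p => isEmptyElim p⟩
  obtain ⟨p0⟩ := hne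
  set w : H := u p0 with hw
  set R0 : ℝ := ‖b p0‖ with hR0
  set Ball : ι → Set H := fun p => Metric.closedBall (u p) ‖b p‖ with hBall
  set D : Finset ι → Set H := fun F => ⋂ p ∈ insert p0 F, Ball p with hDdef
  have hDne : ∀ F : Finset ι, (D F).Nonempty := by
    intro F
    obtain ⟨z, hz⟩ := kv_finite (insert p0 F) (Finset.insert_nonempty _ _) u b
      (fun p _ q _ => h p q)
    refine ⟨z, Set.mem_iInter₂.2 fun p hp => ?_⟩
    rw [hBall]
    simp only [Metric.mem_closedBall, dist_eq_norm]
    exact hz p hp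
  have hDconv : ∀ F, Convex ℝ (D F) :=
    fun F => convex_iInter₂ (fun p _ => convex_closedBall _ _)
  have hDmono : ∀ {F F' : Finset ι}, F ⊆ F' → D F' ⊆ D F := by
    intro F F' hFF'
    refine Set.biInter_subset_biInter_left ?_
    intro p hp
    rcases Finset.mem_insert.1 hp with rfl | hp
    · exact Finset.mem_insert_self _ _
    · exact Finset.mem_insert_of_mem (hFF' hp)
  have hDball : ∀ F, D F ⊆ Ball p0 := fun F =>
    Set.biInter_subset_of_mem (Finset.mem_insert_self _ _)
  set ρ : Finset ι → ℝ := fun F => Metric.infDist w (D F) with hρ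
  have hρ0 : ∀ F, 0 ≤ ρ F := fun F => Metric.infDist_nonneg
  have hρR : ∀ F, ρ F ≤ R0 := by
    intro F
    obtain ⟨x, hx⟩ := hDne F
    refine (Metric.infDist_le_dist_of_mem hx).trans ?_
    have hxb := hDball F hx
    rw [hBall] at hxb
    simp only [Metric.mem_closedBall] at hxb
    rw [hw, dist_comm]
    exact hxb
  have hρmono : ∀ {F F' : Finset ι}, F ⊆ F' → ρ F ≤ ρ F' :=
    fun {F F'} hFF' => Metric.infDist_le_infDist_of_subset (hDmono hFF') (hDne F')
  have hbdd : BddAbove (Set.range ρ) := ⟨R0, by rintro _ ⟨F, rfl⟩; exact hρR F⟩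
  set ρs : ℝ := sSup (Set.range ρ) with hρs
  have hρle : ∀ F, ρ F ≤ ρs := fun F => le_csSup hbdd ⟨F, rfl⟩
  have hρsR : ρs ≤ R0 := csSup_le ⟨ρ ∅, ⟨∅, rfl⟩⟩ (by rintro _ ⟨F, rfl⟩; exact hρR F)
  -- the key parallelogram estimate
  have key : ∀ (F F' : Finset ι) (η : ℝ), 0 < η → η ≤ 1 → F ⊆ F' → ρs - η < ρ F →
      ∀ x ∈ D F, ∀ x' ∈ D F', dist w x < ρ F + η → dist w x' < ρ F' + η →
      dist x x' ^ 2 ≤ 12 * (R0 + 1) * η := by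
    intro F F' η hη hη1 hFF' hρF x hx x' hx' hdx hdx'
    set mid : H := (1/2 : ℝ) • (x + x') with hmid
    have hmidD : mid ∈ D F := by
      have hx'F : x' ∈ D F := hDmono hFF' hx'
      have := (hDconv F) hx hx'F (by norm_num : (0:ℝ) ≤ 1/2) (by norm_num : (0:ℝ) ≤ 1/2)
        (by norm_num)
      simpa [hmid, smul_add] using this
    have hmidd : ρ F ≤ dist w mid := Metric.infDist_le_dist_of_mem hmidD
    have hpar := parallelogram_law_with_norm ℝ (w - x) (w - x')
    have he1 : w - x + (w - x') = (2:ℝ) • (w - mid) := by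
      rw [hmid]; module
    have he2 : w - x - (w - x') = x' - x := by abel
    rw [he1, he2, norm_smul] at hpar
    have hd : dist x x' = ‖x' - x‖ := by rw [dist_comm, dist_eq_norm]
    have hdwm : dist w mid = ‖w - mid‖ := dist_eq_norm _ _
    have hdwx : dist w x = ‖w - x‖ := dist_eq_norm _ _
    have hdwx' : dist w x' = ‖w - x'‖ := dist_eq_norm _ _
    have hρF' : ρ F ≤ ρ F' := hρmono hFF'
    have hρ'le : ρ F' ≤ ρs := hρle F'
    have h0F : 0 ≤ ρ F := hρ0 F
    have hn2 : ‖(2:ℝ)‖ = 2 := by norm_num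
    rw [hn2] at hpar
    have hpar2 : 4 * ‖w - mid‖ ^ 2 + ‖x' - x‖ ^ 2
        = 2 * ‖w - x‖ ^ 2 + 2 * ‖w - x'‖ ^ 2 := by linear_combination hpar
    rw [hdwx] at hdx
    rw [hdwx'] at hdx'
    rw [hdwm] at hmidd
    have hA1 : ‖w - x‖ ^ 2 ≤ (ρ F + η) ^ 2 := by nlinarith [norm_nonneg (w - x)]
    have hA2 : ‖w - x'‖ ^ 2 ≤ (ρ F' + η) ^ 2 := by nlinarith [norm_nonneg (w - x')]
    have hA3 : (ρ F) ^ 2 ≤ ‖w - mid‖ ^ 2 := by nlinarith [norm_nonneg (w - mid)]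
    have hA4 : ρ F' ≤ ρ F + η := by linarith
    have hR0nn : 0 ≤ R0 := norm_nonneg _
    rw [hd]
    nlinarith [hρR F, hρR F', hρ0 F, hρ0 F', sq_nonneg (ρ F' - ρ F)]
  -- approximating finsets
  have hη : ∀ n : ℕ, (0:ℝ) < 1/(n+1) := fun n => by positivity
  have hη1 : ∀ n : ℕ, (1:ℝ)/(n+1) ≤ 1 := by
    intro n
    rw [div_le_one (by positivity)]
    have : (0:ℝ) ≤ n := Nat.cast_nonneg n
    linarith
  have hηmono : ∀ {m n : ℕ}, m ≤ n → (1:ℝ)/(n+1) ≤ 1/(m+1) := by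
    intro m n hmn
    have h1 : (0:ℝ) < m + 1 := by positivity
    have h2 : (m:ℝ) + 1 ≤ n + 1 := by
      have := (Nat.cast_le (α := ℝ)).2 hmn
      linarith
    exact one_div_le_one_div_of_le h1 h2
  have hFex : ∀ n : ℕ, ∃ F : Finset ι, ρs - 1/(n+1) < ρ F := by
    intro n
    have hlt : ρs - 1/(n+1) < ρs := sub_lt_self _ (hη n)
    obtain ⟨r, ⟨F, rfl⟩, hr⟩ := exists_lt_of_lt_csSup (Set.range_nonempty ρ) hlt
    exact ⟨F, hr⟩
  choose Fn hFn using hFex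
  set G : ℕ → Finset ι := fun n => (Finset.range (n+1)).biUnion Fn with hG
  have hFG : ∀ n, Fn n ⊆ G n := fun n =>
    Finset.subset_biUnion_of_mem Fn (Finset.mem_range.2 (Nat.lt_succ_self n))
  have hGmono : ∀ {m n : ℕ}, m ≤ n → G m ⊆ G n := by
    intro m n hmn
    exact Finset.biUnion_subset_biUnion_of_subset_left _
      (Finset.range_subset_range.2 (by omega))
  have hρG : ∀ n, ρs - 1/(n+1) < ρ (G n) := fun n => (hFn n).trans_le (hρmono (hFG n))
  -- near-minimizers
  have hznex : ∀ n : ℕ, ∃ x ∈ D (G n), dist w x < ρ (G n) + 1/(n+1) := by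
    intro n
    have : Metric.infDist w (D (G n)) < ρ (G n) + 1/(n+1) :=
      lt_add_of_pos_right _ (hη n)
    exact (Metric.infDist_lt_iff (hDne _)).1 this
  choose zn hznD hznd using hznex
  have hznex' : ∀ (p : ι) (n : ℕ),
      ∃ x ∈ D (insert p (G n)), dist w x < ρ (insert p (G n)) + 1/(n+1) := by
    intro p n
    have : Metric.infDist w (D (insert p (G n))) < ρ (insert p (G n)) + 1/(n+1) :=
      lt_add_of_pos_right _ (hη n)
    exact (Metric.infDist_lt_iff (hDne _)).1 this
  choose zn' hznD' hznd' using hznex'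
  -- Cauchy estimates
  have hkey2 : ∀ m n : ℕ, m ≤ n →
      dist (zn m) (zn n) ^ 2 ≤ 12 * (R0 + 1) * (1/(m+1)) := by
    intro m n hmn
    refine key (G m) (G n) (1/(m+1)) (hη m) (hη1 m) (hGmono hmn) (hρG m)
      _ (hznD m) _ (hznD n) (hznd m) ?_
    exact (hznd n).trans_le (by linarith [hηmono hmn])
  have hkey3 : ∀ (p : ι) (n : ℕ),
      dist (zn n) (zn' p n) ^ 2 ≤ 12 * (R0 + 1) * (1/(n+1)) := by
    intro p n
    exact key (G n) (insert p (G n)) (1/(n+1)) (hη n) (hη1 n)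
      (Finset.subset_insert _ _) (hρG n) _ (hznD n) _ (hznD' p n) (hznd n) (hznd' p n)
  have hCb : (0:ℝ) ≤ 12 * (R0 + 1) := by nlinarith [norm_nonneg (b p0)]
  have hsq : ∀ m n : ℕ, m ≤ n →
      dist (zn m) (zn n) ≤ Real.sqrt (12 * (R0 + 1) * (1/(m+1))) := by
    intro m n hmn
    rw [← Real.sqrt_sq dist_nonneg]
    exact Real.sqrt_le_sqrt (hkey2 m n hmn)
  have htend0 : Filter.Tendsto (fun n : ℕ => Real.sqrt (12 * (R0 + 1) * (1/(n+1))))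
      Filter.atTop (nhds 0) := by
    have h1 : Filter.Tendsto (fun n : ℕ => 12 * (R0 + 1) * (1/(n+1)))
        Filter.atTop (nhds 0) := by
      have := tendsto_one_div_add_atTop_nhds_zero_nat.const_mul (12 * (R0 + 1))
      simpa using this
    have h2 := (Real.continuous_sqrt.tendsto 0).comp h1
    rw [Real.sqrt_zero] at h2; exact h2
  have hC : CauchySeq zn := by
    refine cauchySeq_of_le_tendsto_0 (fun n => Real.sqrt (12 * (R0 + 1) * (1/(n+1))))
      (fun n m N hn hm => ?_) htend0
    rcases le_total n m with hnm | hmn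
    · exact (hsq n m hnm).trans (Real.sqrt_le_sqrt
        (mul_le_mul_of_nonneg_left (hηmono hn) hCb))
    · rw [dist_comm]
      exact (hsq m n hmn).trans (Real.sqrt_le_sqrt
        (mul_le_mul_of_nonneg_left (hηmono hm) hCb))
  obtain ⟨zl, hzl⟩ := cauchySeq_tendsto_of_complete hC
  refine ⟨zl, fun p => ?_⟩
  have hdist' : ∀ n, dist (zn n) (zn' p n) ≤ Real.sqrt (12 * (R0 + 1) * (1/(n+1))) := by
    intro n
    rw [← Real.sqrt_sq dist_nonneg]
    exact Real.sqrt_le_sqrt (hkey3 p n)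
  have htendp : Filter.Tendsto (fun n => zn' p n) Filter.atTop (nhds zl) := by
    rw [tendsto_iff_dist_tendsto_zero]
    have hb : ∀ n, dist (zn' p n) zl
        ≤ Real.sqrt (12 * (R0 + 1) * (1/(n+1))) + dist (zn n) zl := by
      intro n
      calc dist (zn' p n) zl ≤ dist (zn' p n) (zn n) + dist (zn n) zl :=
            dist_triangle _ _ _
        _ ≤ Real.sqrt (12 * (R0 + 1) * (1/(n+1))) + dist (zn n) zl := by
            rw [dist_comm]
            linarith [hdist' n]
    have hzt : Filter.Tendsto (fun n => dist (zn n) zl) Filter.atTop (nhds 0) :=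
      tendsto_iff_dist_tendsto_zero.1 hzl
    have hsum : Filter.Tendsto
        (fun n : ℕ => Real.sqrt (12 * (R0 + 1) * (1/(n+1))) + dist (zn n) zl)
        Filter.atTop (nhds 0) := by
      have := htend0.add hzt
      simpa using this
    exact squeeze_zero (fun n => dist_nonneg) hb hsum
  have hmem : ∀ n, zn' p n ∈ Ball p := by
    intro n
    have := hznD' p n
    rw [hDdef] at this
    exact Set.mem_iInter₂.1 this p
      (Finset.mem_insert_of_mem (Finset.mem_insert_self p (G n)))
  have hcl : zl ∈ Ball p := by
    rw [hBall]
    exact (Metric.isClosed_closedBall (x := u p) (ε := ‖b p‖)).mem_of_tendsto htendp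
      (Filter.Eventually.of_forall (fun n => by
        have := hmem n; rw [hBall] at this; exact this))
  rw [hBall] at hcl
  simp only [Metric.mem_closedBall, dist_eq_norm] at hcl
  exact hcl

/-- one-point extension -/
lemma kv_onept [CompleteSpace H] {L : ℝ} (hL : 0 < L) (M : Set (H × H))
    (hM : ∀ a ∈ M, ∀ c ∈ M, ‖a.2 - c.2‖ ≤ L * ‖a.1 - c.1‖) (x : H) :
    ∃ z : H, ∀ a ∈ M, ‖z - a.2‖ ≤ L * ‖x - a.1‖ := by
  have hpq : ∀ p q : M, ‖(p : H × H).2 - (q : H × H).2‖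
      ≤ ‖L • (x - (p : H × H).1) - L • (x - (q : H × H).1)‖ := by
    intro p q
    have h1 : L • (x - (p : H × H).1) - L • (x - (q : H × H).1)
        = L • ((q : H × H).1 - (p : H × H).1) := by
      rw [← smul_sub]; congr 1; abel
    rw [h1, norm_smul, Real.norm_eq_abs, abs_of_pos hL, norm_sub_rev]
    exact hM _ q.2 _ p.2
  obtain ⟨z, hz⟩ := kv_inter (ι := M) (fun a => (a : H × H).2)
    (fun a => L • (x - (a : H × H).1)) hpq
  refine ⟨z, fun a ha => ?_⟩
  have := hz ⟨a, ha⟩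
  rwa [norm_smul, Real.norm_eq_abs, abs_of_pos hL] at this

end KV

/-- Interpolation theorem for `L`-Lipschitz continuous operators on a real Hilbert
space (the nontrivial direction is the Kirszbraun–Valentine extension theorem). -/
theorem lipschitz_interpolation
    {H : Type*} [NormedAddCommGroup H] [InnerProductSpace ℝ H] [CompleteSpace H]
    (L : ℝ) (hL : 0 < L) {J : Type*} (y u : J → H) :
    (∃ G : H → H, (∀ x z : H, ‖G x - G z‖ ≤ L * ‖x - z‖) ∧ ∀ i, G (y i) = u i) ↔
    (∀ i j, ‖u i - u j‖ ≤ L * ‖y i - y j‖) := by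
  constructor
  · rintro ⟨G, hGL, hGy⟩ i j
    rw [← hGy i, ← hGy j]
    exact hGL _ _
  · intro hcond
    set S : Set (Set (H × H)) := {M | (∀ i, (y i, u i) ∈ M) ∧
      ∀ a ∈ M, ∀ c ∈ M, ‖a.2 - c.2‖ ≤ L * ‖a.1 - c.1‖} with hS
    have hM0 : Set.range (fun i => (y i, u i)) ∈ S := by
      constructor
      · exact fun i => ⟨i, rfl⟩
      · rintro a ⟨i, rfl⟩ c ⟨j, rfl⟩
        exact hcond i j
    have hchains : ∀ c ⊆ S, IsChain (· ⊆ ·) c → c.Nonempty →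
        ∃ ub ∈ S, ∀ s ∈ c, s ⊆ ub := by
      intro c hcS hchain hcne
      refine ⟨⋃₀ c, ⟨?_, ?_⟩, fun s hs => Set.subset_sUnion_of_mem hs⟩
      · intro i
        obtain ⟨s, hs⟩ := hcne
        exact Set.mem_sUnion.2 ⟨s, hs, (hcS hs).1 i⟩
      · rintro a ⟨s, hs, has⟩ b ⟨t, ht, hbt⟩
        rcases hchain.total hs ht with hst | hts
        · exact (hcS ht).2 a (hst has) b hbt
        · exact (hcS hs).2 a has b (hts hbt)
    obtain ⟨M, hM0M, hMmax⟩ := zorn_subset_nonempty S hchains _ hM0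
    have hMS : M ∈ S := hMmax.1
    -- totality
    have htot : ∀ x : H, ∃ v, (x, v) ∈ M := by
      intro x
      by_contra hno
      push_neg at hno
      obtain ⟨z, hz⟩ := kv_onept hL M hMS.2 x
      have hins : insert (x, z) M ∈ S := by
        constructor
        · exact fun i => Set.mem_insert_of_mem _ (hMS.1 i)
        · intro a ha c hc
          rcases Set.mem_insert_iff.1 ha with rfl | ha <;>
            rcases Set.mem_insert_iff.1 hc with rfl | hc
          · simp
          · exact hz c hc
          · calc ‖a.2 - z‖ = ‖z - a.2‖ := by rw [norm_sub_rev]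
              _ ≤ L * ‖x - a.1‖ := hz a ha
              _ = L * ‖a.1 - x‖ := by rw [norm_sub_rev]
          · exact hMS.2 a ha c hc
      have hsub : M ⊆ insert (x, z) M := Set.subset_insert _ _
      have := hMmax.2 hins hsub
      exact hno z (this (Set.mem_insert _ _))
    choose G hG using htot
    have huniq : ∀ (x : H) (v : H), (x, v) ∈ M → v = G x := by
      intro x v hv
      have := hMS.2 (x, v) hv (x, G x) (hG x)
      simp only [sub_self, norm_zero, mul_zero] at this
      have h0 : ‖v - G x‖ = 0 := le_antisymm this (norm_nonneg _)
      rwa [norm_sub_eq_zero_iff] at h0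
    refine ⟨G, fun a c => ?_, fun i => (huniq _ _ (hM0M ⟨i, rfl⟩)).symm⟩
    exact hMS.2 (a, G a) (hG a) (c, G c) (hG c)
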